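/- Fix an even Δ-free setting: for Δ ∈ (0,1/2), 0 ≤ k ≤ n, let h⁺ = (1/2+Δ)^k(1/2−Δ)^{n−k} and h⁻ = (1/2−Δ)^k(1/2+Δ)^{n−k}. Then (1/2+Δ)·((1+2Δ)/(1−2Δ)·r − 1)² + (1/2−Δ)·((1−2Δ)/(1+2Δ)·r − 1)² ≤ (r−1)² + O(Δ²)·r², where r = h⁺/h⁻ and the implied constant is universal for Δ below a universal constant. -/

import Mathlib

/-- One-step growth bound for the quadratic potential `(r−1)²` of the likelihood ratio
`r = h⁺/h⁻` under one more flip of a bias-`(1/2+Δ)` coin. -/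
theorem stmt_17 : ∃ c > (0:ℝ), ∃ δ₀ > (0:ℝ), ∀ Δ : ℝ, 0 < Δ → Δ < 1/2 → Δ ≤ δ₀ →
    ∀ n k : ℕ, k ≤ n → ∀ r : ℝ,
    r = ((1/2 + Δ) ^ k * (1/2 - Δ) ^ (n - k)) / ((1/2 - Δ) ^ k * (1/2 + Δ) ^ (n - k)) →
    (1/2 + Δ) * ((1 + 2*Δ) / (1 - 2*Δ) * r - 1) ^ 2
      + (1/2 - Δ) * ((1 - 2*Δ) / (1 + 2*Δ) * r - 1) ^ 2
      ≤ (r - 1) ^ 2 + c * Δ ^ 2 * r ^ 2 := by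
  refine ⟨100, by norm_num, 1/4, by norm_num, ?_⟩
  intro Δ hΔ0 hΔhalf hΔδ n k hk r hr
  have hp : (0:ℝ) < 1/2 + Δ := by linarith
  have hm : (0:ℝ) < 1/2 - Δ := by linarith
  have hr0 : 0 ≤ r := by
    rw [hr]; positivity
  have h1 : (0:ℝ) < 1 - 2*Δ := by linarith
  have h2 : (0:ℝ) < 1 + 2*Δ := by linarith
  rw [← sub_nonneg]
  have key : (r - 1) ^ 2 + 100 * Δ ^ 2 * r ^ 2 -
      ((1/2 + Δ) * ((1 + 2*Δ) / (1 - 2*Δ) * r - 1) ^ 2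
        + (1/2 - Δ) * ((1 - 2*Δ) / (1 + 2*Δ) * r - 1) ^ 2)
      = (32*Δ^2/((1-2*Δ)*(1+2*Δ))) * r
        + (100*Δ^2 - (48*Δ^2+64*Δ^4)/((1-2*Δ)^2*(1+2*Δ)^2)) * r^2 := by
    field_simp [show 1 - Δ*2 ≠ 0 by linarith, show 1 + Δ*2 ≠ 0 by linarith]
    ring
  rw [key]
  have hb : (0:ℝ) < (1-2*Δ)^2*(1+2*Δ)^2 := by positivity
  have hx : Δ^2 ≤ 1/16 := by nlinarith
  have hc : (48*Δ^2+64*Δ^4)/((1-2*Δ)^2*(1+2*Δ)^2) ≤ 100*Δ^2 := by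
    rw [div_le_iff₀ hb]
    nlinarith [mul_nonneg (sq_nonneg Δ) (sq_nonneg (Δ^2 - 1/16)),
      mul_nonneg (sq_nonneg Δ) (sub_nonneg.2 hx)]
  have h3 : 0 ≤ (32*Δ^2/((1-2*Δ)*(1+2*Δ))) * r :=
    mul_nonneg (by positivity) hr0
  nlinarith [mul_nonneg (sub_nonneg.2 hc) (sq_nonneg r)]
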